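/- Correctness of the single-vertex transition test (Algorithm 3.2): for the linear system dx/dt = Ax + Bu with u ranging over all of ℝᵐ, and adjacent hypercubic cells y < y' sharing a face orthogonal to coordinate axis k with lowest common vertex v₀ and cells of side length ε, the transition y → y' is admissible (i.e., there exist a vertex v of the common face and u with the k-th component of Av + Bu strictly positive) if and only if either some entry of row k of B is nonzero, or a_k^T v₀ + a_k⁺ ε > 0, where a_k^T is row k of A and a_k⁺ is the sum of positive off-diagonal entries of row k of A. -/

import Mathlib

open Matrix

lemma face_eval {n : ℕ} (A : Matrix (Fin n) (Fin n) ℝ) (v₀ : Fin n → ℝ) (ε : ℝ)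
    (k : Fin n) (S : Finset (Fin n)) :
    (A *ᵥ (fun i => v₀ i + if i ∈ S then ε else 0)) k
      = (A *ᵥ v₀) k + ∑ j ∈ S, A k j * ε := by
  simp [mulVec, dotProduct, mul_add, Finset.sum_add_distrib, mul_ite, mul_zero,
    Finset.sum_ite_mem]

/-- Correctness of the single-vertex transition test (Algorithm 3.2): for
`dx/dt = Ax + Bu` with unconstrained `u ∈ ℝᵐ` and adjacent hypercubic cells
`y < y'` of side `ε` sharing a face orthogonal to axis `k` with lowest common
vertex `v₀` (the face vertices being `v₀ + ε·χ_S` for `S ⊆ {1,…,n} \ {k}`), the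
transition `y → y'` is admissible — i.e. the `k`-th component of `Av + Bu` is
strictly positive for some face vertex `v` and control `u` — iff some entry of row
`k` of `B` is nonzero, or `aₖᵀv₀ + aₖ⁺ε > 0`, where `aₖ⁺` is the sum of the
positive off-diagonal entries of row `k` of `A`. -/
theorem single_vertex_transition_test {n m : ℕ}
    (A : Matrix (Fin n) (Fin n) ℝ) (B : Matrix (Fin n) (Fin m) ℝ)
    (k : Fin n) (v₀ : Fin n → ℝ) (ε : ℝ) (hε : 0 < ε) :
    (∃ S : Finset (Fin n), k ∉ S ∧ ∃ u : Fin m → ℝ,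
        0 < (A *ᵥ (fun i => v₀ i + if i ∈ S then ε else 0) + B *ᵥ u) k) ↔
      ((∃ j, B k j ≠ 0) ∨
        0 < (A *ᵥ v₀) k + (∑ j ∈ Finset.univ.erase k, max (A k j) 0) * ε) := by
  constructor
  · rintro ⟨S, hkS, u, hu⟩
    by_cases hB : ∃ j, B k j ≠ 0
    · exact Or.inl hB
    · right
      push_neg at hB
      have hBu : (B *ᵥ u) k = 0 := by simp [mulVec, dotProduct, hB]
      rw [Pi.add_apply, hBu, add_zero, face_eval] at hu
      have h1 : ∑ j ∈ S, A k j * ε ≤ ∑ j ∈ Finset.univ.erase k, max (A k j) 0 * ε := by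
        refine le_trans (Finset.sum_le_sum fun j _ => ?_)
          (Finset.sum_le_sum_of_subset_of_nonneg ?_ fun j _ _ => ?_)
        · exact mul_le_mul_of_nonneg_right (le_max_left _ _) hε.le
        · intro j hj
          exact Finset.mem_erase.2 ⟨fun h => hkS (h ▸ hj), Finset.mem_univ j⟩
        · exact mul_nonneg (le_max_right _ _) hε.le
      rw [Finset.sum_mul]
      linarith
  · rintro (⟨j, hj⟩ | hpos)
    · refine ⟨∅, Finset.notMem_empty k, ?_⟩
      set t := (A *ᵥ (fun i => v₀ i + if i ∈ (∅ : Finset (Fin n)) then ε else 0)) k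
      refine ⟨fun i => if i = j then (1 - t) / B k j else 0, ?_⟩
      have hBu : (B *ᵥ fun i => if i = j then (1 - t) / B k j else 0) k = 1 - t := by
        simp only [mulVec, dotProduct, mul_ite, mul_zero, Finset.sum_ite_eq',
          Finset.mem_univ, if_true]
        field_simp
      rw [Pi.add_apply, hBu]
      linarith
    · refine ⟨(Finset.univ.erase k).filter (fun j => 0 < A k j),
        fun h => (Finset.mem_erase.1 (Finset.mem_filter.1 h).1).1 rfl, 0, ?_⟩
      have h0 : (B *ᵥ (0 : Fin m → ℝ)) k = 0 := by simp
      rw [Pi.add_apply, h0, add_zero, face_eval]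
      have hsum : ∑ j ∈ (Finset.univ.erase k).filter (fun j => 0 < A k j), A k j * ε
          = ∑ j ∈ Finset.univ.erase k, max (A k j) 0 * ε := by
        rw [Finset.sum_filter]
        refine Finset.sum_congr rfl fun j _ => ?_
        by_cases h : 0 < A k j
        · simp [h, max_eq_left h.le]
        · simp [h, max_eq_right (not_lt.1 h)]
      rw [hsum, ← Finset.sum_mul]
      exact hpos
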